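/- Let n ≥ 2, m ≥ 2, and let P be an ergodic m-th order, n-dimensional stochastic tensor on S = {1,…,n}. Then the tensor equation μ = E + (μ − μ_d) ⊠ P, regarded as a linear system in the n^m unknown entries of the m-th order, n-dimensional tensor μ, has a unique solution (whose entries are the mean first passage times of the chain). Here E is the all-ones m-th order, n-dimensional tensor and μ_d is the diagonal part of μ. -/
import Mathlib


open Finset

/-- An `m`-th order, `n`-dimensional tensor with `m = r + 2`: the entry
`p_{i₁ i₂ … i_m}` is written `P i₁ t`, where `t = (i₂, …, i_m)` is the tail of
`m - 1 = r + 1` indices. -/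
abbrev HOTensor (n r : ℕ) := Fin n → (Fin (r + 1) → Fin n) → ℝ

/-- `P` is a stochastic tensor. -/
def IsStochasticT {n r : ℕ} (P : HOTensor n r) : Prop :=
  (∀ i t, 0 ≤ P i t ∧ P i t ≤ 1) ∧ ∀ t, ∑ i : Fin n, P i t = 1

/-- The product `A ⊠ B`:
`(A ⊠ B)_{i₁ i₂ … i_m} = Σ_j a_{i₁ j i₂ … i_{m-1}} b_{j i₂ … i_m}`. -/
def tmul {n r : ℕ} (A B : HOTensor n r) : HOTensor n r :=
  fun i t => ∑ j : Fin n, A i (Fin.cons j (Fin.init t)) * B j t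

/-- Tensor powers: `tpow P k` is `P^k`, with entries the `k`-step transition
probabilities `p^{(k)}_{i₁ … i_m}`; `P^0` is the identity tensor. -/
def tpow {n r : ℕ} (P : HOTensor n r) : ℕ → HOTensor n r
  | 0 => fun i t => if i = t 0 then 1 else 0
  | k + 1 => tmul (tpow P k) P

/-- `fpp P k` is the `(k+1)`-step first passage probability tensor `F^{[k+1]}`:
`f^{[1]} = p`, and `f^{[k+1]}_{i₁ i₂ … i_m} = Σ_{j ≠ i₁} f^{[k]}_{i₁ j i₂ … i_{m-1}} p_{j i₂ … i_m}`. -/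
def fpp {n r : ℕ} (P : HOTensor n r) : ℕ → HOTensor n r
  | 0 => P
  | k + 1 => fun i t =>
      ∑ j ∈ Finset.univ.filter (fun j => j ≠ i), fpp P k i (Fin.cons j (Fin.init t)) * P j t

/-- The ever-reaching probability `f_{i₁ i₂ … i_m} = Σ_{k=1}^∞ f^{[k]}_{i₁ i₂ … i_m}`. -/
noncomputable def everReach {n r : ℕ} (P : HOTensor n r) : HOTensor n r :=
  fun i t => ∑' k : ℕ, fpp P k i t

/-- State `j` is reachable from state `i` (`i → j`): for every choice of
`i₃, …, i_m` there is `k ≥ 0` with `p^{(k)}_{j i i₃ … i_m} > 0`. -/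
def Reach {n r : ℕ} (P : HOTensor n r) (i j : Fin n) : Prop :=
  ∀ u : Fin r → Fin n, ∃ k : ℕ, 0 < tpow P k j (Fin.cons i u)

/-- States `i` and `j` communicate (`i ↔ j`). -/
def Comm {n r : ℕ} (P : HOTensor n r) (i j : Fin n) : Prop :=
  Reach P i j ∧ Reach P j i

/-- State `i` is recurrent: `f_{i i i₃ … i_m} = 1` for all `i₃, …, i_m`. -/
def RecurrentState {n r : ℕ} (P : HOTensor n r) (i : Fin n) : Prop :=
  ∀ u : Fin r → Fin n, everReach P i (Fin.cons i u) = 1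

/-- State `i` is fully transient: `f_{i i i₃ … i_m} < 1` for all `i₃, …, i_m`. -/
def FullyTransientState {n r : ℕ} (P : HOTensor n r) (i : Fin n) : Prop :=
  ∀ u : Fin r → Fin n, everReach P i (Fin.cons i u) < 1

/-- `P` is ergodic: for all indices there is `k ≥ 1` with `p^{(k)}_{i₁ … i_m} > 0`. -/
def ErgodicT {n r : ℕ} (P : HOTensor n r) : Prop :=
  ∀ (i : Fin n) (t : Fin (r + 1) → Fin n), ∃ k : ℕ, 1 ≤ k ∧ 0 < tpow P k i t

/-- `P` is regular: some power `P^k`, `k ≥ 1`, has all entries positive. -/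
def RegularT {n r : ℕ} (P : HOTensor n r) : Prop :=
  ∃ k : ℕ, 1 ≤ k ∧ ∀ (i : Fin n) (t : Fin (r + 1) → Fin n), 0 < tpow P k i t

/-- The reduced transition matrix `Q` of `P`: rows and columns are indexed by
`(m-1)`-tuples; the entry in row `(i₁, …, i_{m-1})` and column `(j₁, …, j_{m-1})`
is `p_{i₁ i₂ … i_{m-1} j_{m-1}}` if `j_ℓ = i_{ℓ+1}` for `ℓ = 1, …, m-2`, else `0`. -/
def reducedT {n r : ℕ} (P : HOTensor n r) :
    Matrix (Fin (r + 1) → Fin n) (Fin (r + 1) → Fin n) ℝ :=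
  fun u v =>
    if ∀ ℓ : Fin r, v ℓ.castSucc = u ℓ.succ then
      P (u 0) (Fin.snoc (Fin.tail u) (v (Fin.last r)))
    else 0

/-- The diagonal part `A_d` of a tensor: its `(i₁, i₂, i₃, …, i_m)` entry is
`a_{i₁ i₁ i₃ … i_m}` if `i₁ = i₂`, and `0` otherwise. -/
def diagPart {n r : ℕ} (A : HOTensor n r) : HOTensor n r :=
  fun i t => if t 0 = i then A i t else 0

section Aux

variable {n r : ℕ}

lemma tmul_sub_diag (μ P : HOTensor n r) (i : Fin n) (t : Fin (r + 1) → Fin n) :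
    tmul (fun i' t' => μ i' t' - diagPart μ i' t') P i t
      = ∑ j ∈ Finset.univ.filter (fun j => j ≠ i), μ i (Fin.cons j (Fin.init t)) * P j t := by
  rw [tmul, Finset.sum_filter]
  refine Finset.sum_congr rfl fun j _ => ?_
  by_cases hj : j = i
  · subst hj
    simp [diagPart]
  · simp [diagPart, hj]

/-- If `f` satisfies the homogeneous equation, it vanishes. -/
lemma hom_sol_zero (P : HOTensor n r) (hP : IsStochasticT P) (herg : ErgodicT P)
    (f : HOTensor n r)
    (hf : ∀ i t, f i t = ∑ j ∈ Finset.univ.filter (fun j => j ≠ i),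
        f i (Fin.cons j (Fin.init t)) * P j t) :
    ∀ i t, f i t = 0 := by
  intro i
  have hnn : ∀ j t, 0 ≤ P j t := fun j t => (hP.1 j t).1
  have hrow : ∀ t : Fin (r + 1) → Fin n,
      ∑ j ∈ Finset.univ.filter (fun j => j ≠ i), P j t = 1 - P i t := by
    intro t
    rw [show (Finset.univ.filter (fun j => j ≠ i)) = Finset.univ.erase i from
      Finset.filter_ne' Finset.univ i,
      Finset.sum_erase_eq_sub (Finset.mem_univ i), hP.2 t]
  have hne : Nonempty (Fin n) := by
    rcases herg i (fun _ => i) with ⟨k, -, -⟩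
    exact ⟨i⟩
  obtain ⟨t0, -, hmax⟩ := Finset.exists_max_image (Finset.univ : Finset (Fin (r+1) → Fin n))
      (fun t => |f i t|) ⟨fun _ => i, Finset.mem_univ _⟩
  set M := |f i t0| with hM
  have hmax' : ∀ t, |f i t| ≤ M := fun t => hmax t (Finset.mem_univ t)
  rcases le_or_gt M 0 with hM0 | hMpos
  · intro t
    exact abs_eq_zero.mp (le_antisymm ((hmax' t).trans hM0) (abs_nonneg _))
  · exfalso
    have claimA : ∀ t, |f i t| = M →
        P i t = 0 ∧ ∀ j, j ≠ i → 0 < P j t → |f i (Fin.cons j (Fin.init t))| = M := by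
      intro t ht
      have step1 : |f i t| ≤ ∑ j ∈ Finset.univ.filter (fun j => j ≠ i),
          |f i (Fin.cons j (Fin.init t))| * P j t := by
        rw [hf i t]
        refine (Finset.abs_sum_le_sum_abs _ _).trans ?_
        refine Finset.sum_le_sum fun j _ => ?_
        rw [abs_mul, abs_of_nonneg (hnn j t)]
      have step2 : ∑ j ∈ Finset.univ.filter (fun j => j ≠ i),
          |f i (Fin.cons j (Fin.init t))| * P j t ≤ M * (1 - P i t) := by
        rw [← hrow t, Finset.mul_sum]
        exact Finset.sum_le_sum fun j _ =>
          mul_le_mul_of_nonneg_right (hmax' _) (hnn j t)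
      have hPit : P i t = 0 := by
        have hle : M ≤ M * (1 - P i t) := by
          calc M = |f i t| := ht.symm
          _ ≤ _ := step1.trans step2
        nlinarith [hnn i t]
      refine ⟨hPit, fun j hj hpos => ?_⟩
      have hterm : ∀ j ∈ Finset.univ.filter (fun j => j ≠ i),
          (M - |f i (Fin.cons j (Fin.init t))|) * P j t = 0 := by
        have hnonneg : ∀ j ∈ Finset.univ.filter (fun j => j ≠ i),
            0 ≤ (M - |f i (Fin.cons j (Fin.init t))|) * P j t := fun j _ =>
          mul_nonneg (sub_nonneg.mpr (hmax' _)) (hnn j t)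
        have expand : ∑ j ∈ Finset.univ.filter (fun j => j ≠ i),
            (M - |f i (Fin.cons j (Fin.init t))|) * P j t
            = M * (1 - P i t) - ∑ j ∈ Finset.univ.filter (fun j => j ≠ i),
                |f i (Fin.cons j (Fin.init t))| * P j t := by
          simp only [sub_mul, Finset.sum_sub_distrib, ← Finset.mul_sum, hrow t]
        have hlez : ∑ j ∈ Finset.univ.filter (fun j => j ≠ i),
            (M - |f i (Fin.cons j (Fin.init t))|) * P j t ≤ 0 := by
          rw [expand, hPit]
          have : M ≤ ∑ j ∈ Finset.univ.filter (fun j => j ≠ i),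
              |f i (Fin.cons j (Fin.init t))| * P j t := ht ▸ step1
          linarith
        have hzero : ∑ j ∈ Finset.univ.filter (fun j => j ≠ i),
            (M - |f i (Fin.cons j (Fin.init t))|) * P j t = 0 :=
          le_antisymm hlez (Finset.sum_nonneg hnonneg)
        exact fun j hjm =>
          ((Finset.sum_eq_zero_iff_of_nonneg hnonneg).mp hzero) j hjm
      have h0 := hterm j (Finset.mem_filter.mpr ⟨Finset.mem_univ j, hj⟩)
      rcases mul_eq_zero.mp h0 with h | h
      · linarith [abs_nonneg (f i (Fin.cons j (Fin.init t)))]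
      · exact absurd h (ne_of_gt hpos)
    have claimB : ∀ k t, |f i t| = M → tpow P (k + 1) i t = 0 := by
      intro k
      induction k with
      | zero =>
        intro t ht
        have h1 : tpow P 1 i t = P i t := by
          show ∑ j : Fin n, tpow P 0 i (Fin.cons j (Fin.init t)) * P j t = P i t
          simp [tpow]
        rw [h1]
        exact (claimA t ht).1
      | succ k ih =>
        intro t ht
        show ∑ j : Fin n, tpow P (k + 1) i (Fin.cons j (Fin.init t)) * P j t = 0
        refine Finset.sum_eq_zero fun j _ => ?_
        by_cases hj : j = i
        · subst hj; rw [(claimA t ht).1, mul_zero]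
        · rcases eq_or_lt_of_le (hnn j t) with hz | hpos
          · rw [← hz, mul_zero]
          · rw [ih _ ((claimA t ht).2 j hj hpos), zero_mul]
    obtain ⟨k, hk1, hkpos⟩ := herg i t0
    obtain ⟨k', rfl⟩ : ∃ k', k = k' + 1 := ⟨k - 1, by omega⟩
    rw [claimB k' t0 hM.symm] at hkpos
    exact lt_irrefl 0 hkpos

/-- The linear operator `f ↦ f - T f`. -/
noncomputable def Lmap (P : HOTensor n r) : (HOTensor n r) →ₗ[ℝ] (HOTensor n r) where
  toFun f := fun i t => f i t - ∑ j ∈ Finset.univ.filter (fun j => j ≠ i),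
      f i (Fin.cons j (Fin.init t)) * P j t
  map_add' f g := by
    funext i t
    simp only [Pi.add_apply, add_mul, Finset.sum_add_distrib]
    ring
  map_smul' c f := by
    funext i t
    simp only [Pi.smul_apply, smul_eq_mul, RingHom.id_apply, Finset.mul_sum, mul_assoc]
    ring_nf
    rw [Finset.mul_sum]
    ring_nf

end Aux

/-- for an ergodic chain, the mean first passage time equation
`μ = E + (μ - μ_d) ⊠ P` has a unique solution `μ`. -/
theorem mfpt_unique_solution (n r : ℕ) (hn : 2 ≤ n)
    (P : HOTensor n r) (hP : IsStochasticT P) (herg : ErgodicT P) :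
    ∃! μ : HOTensor n r, ∀ (i : Fin n) (t : Fin (r + 1) → Fin n),
      μ i t = 1 + tmul (fun i' t' => μ i' t' - diagPart μ i' t') P i t := by
  have hinj : Function.Injective (Lmap P) := by
    rw [injective_iff_map_eq_zero]
    intro f hf0
    funext i t
    refine hom_sol_zero P hP herg f (fun i t => ?_) i t
    have h := congrFun (congrFun hf0 i) t
    simp only [Lmap, LinearMap.coe_mk, AddHom.coe_mk, Pi.zero_apply] at h
    linarith
  have hsurj : Function.Surjective (Lmap P) :=
    LinearMap.injective_iff_surjective.mp hinj
  obtain ⟨μ, hμ⟩ := hsurj (fun _ _ => 1)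
  have key : ∀ ξ : HOTensor n r,
      (∀ i t, ξ i t = 1 + tmul (fun i' t' => ξ i' t' - diagPart ξ i' t') P i t) ↔
        Lmap P ξ = fun _ _ => 1 := by
    intro ξ
    constructor
    · intro h
      funext i t
      have := h i t
      rw [tmul_sub_diag] at this
      simp only [Lmap, LinearMap.coe_mk, AddHom.coe_mk]
      linarith
    · intro h i t
      have := congrFun (congrFun h i) t
      simp only [Lmap, LinearMap.coe_mk, AddHom.coe_mk] at this
      rw [tmul_sub_diag]
      linarith
  refine ⟨μ, (key μ).mpr hμ, fun ν hν => hinj ?_⟩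
  rw [(key ν).mp hν, hμ]
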